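/- Let E be a real Hilbert space, ψ : E → ℝ a differentiable 1-strongly convex function, and W ⊆ E a nonempty closed convex set. Let η > 0, G > 0, B ≥ 0, N ≥ 1, and let w* ∈ W. Suppose w₁, …, w_{N+1} ∈ W, g₁, …, g_N ∈ E, and v₁, …, v_N ∈ E satisfy: ‖g_j‖ ≤ G, ∇ψ(v_j) = ∇ψ(w_j) − η·g_j, and w_{j+1} is a Bregman projection of v_j onto W (Δψ(w_{j+1}, v_j) ≤ Δψ(x, v_j) for all x ∈ W), for every j = 1, …, N. If Δψ(w*, w₁) ≤ B², then Σ_{j=1}^N ⟪w_j − w*, g_j⟫ ≤ B²/η + N·η·G²/2. -/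

import Mathlib

open RealInnerProductSpace

/-- First-order optimality: if `f` has gradient `gp` at `p` and `f p ≤ f` along the
segment from `p` to `x`, then the directional derivative at `p` towards `x` is nonneg. -/
lemma min_on_segment_inner_nonneg {E : Type*} [NormedAddCommGroup E] [InnerProductSpace ℝ E]
    [CompleteSpace E]
    (f : E → ℝ) (p gp : E) (hf : HasGradientAt f gp p)
    (x : E) (hseg : ∀ t : ℝ, t ∈ Set.Icc (0:ℝ) 1 → f p ≤ f (p + t • (x - p))) :
    0 ≤ ⟪gp, x - p⟫ := by
  set φ : ℝ → ℝ := fun t => f (p + t • (x - p)) with hφdef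
  have hL : HasDerivAt (fun s : ℝ => p + s • (x - p)) (x - p) 0 := by
    simpa using ((hasDerivAt_id (0:ℝ)).smul_const (x - p)).const_add p
  have hφ : HasDerivAt φ ⟪gp, x - p⟫ 0 := by
    have h0 : HasFDerivAt f (InnerProductSpace.toDual ℝ E gp) (p + (0:ℝ) • (x - p)) := by
      simpa using hf.hasFDerivAt
    simpa [hφdef, Function.comp_def] using h0.comp_hasDerivAt 0 hL
  have hslope : Filter.Tendsto (slope φ 0) (nhdsWithin 0 (Set.Ioi 0)) (nhds ⟪gp, x - p⟫) :=
    (hasDerivAt_iff_tendsto_slope.mp hφ).mono_left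
      (nhdsWithin_mono _ (by intro t ht; exact ne_of_gt ht))
  refine ge_of_tendsto hslope ?_
  filter_upwards [Ioc_mem_nhdsGT_of_mem (by simp : (0:ℝ) ∈ Set.Ico 0 1)] with t ht
  have h1 : f p ≤ φ t := hseg t ⟨le_of_lt ht.1, ht.2⟩
  have h0 : φ 0 = f p := by simp [hφdef]
  have : 0 ≤ φ t - φ 0 := by rw [h0]; linarith
  have := div_nonneg this (le_of_lt ht.1)
  simpa [slope, sub_zero, div_eq_inv_mul] using this

/-- **Telescoped regret bound for `N` steps of online mirror descent.**
Iterates are indexed `w 0, …, w N` (so `w 0, …, w N` are the `N+1` points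
`w₁, …, w_{N+1}` of the statement), with `w (j+1)` a Bregman projection onto `W`
of `v j` where `∇ψ(v j) = ∇ψ(w j) - η·(g j)` and `‖g j‖ ≤ G`. If
`Δψ(w*, w 0) ≤ B²` then `Σ_{j<N} ⟪w j - w*, g j⟫ ≤ B²/η + N·η·G²/2`. -/
theorem mirror_descent_telescoped_regret
    {E : Type*} [NormedAddCommGroup E] [InnerProductSpace ℝ E] [CompleteSpace E]
    (ψ : E → ℝ) (ψ' : E → E) (hψ : ∀ x, HasGradientAt ψ (ψ' x) x)
    (hsc : ∀ x y : E, ψ x + ⟪ψ' x, y - x⟫ + ‖y - x‖ ^ 2 / 2 ≤ ψ y)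
    (W : Set E) (hWne : W.Nonempty) (hWcl : IsClosed W) (hWconv : Convex ℝ W)
    (Dψ : E → E → ℝ) (hD : ∀ x y, Dψ x y = ψ x - ψ y - ⟪ψ' y, x - y⟫)
    (η G B : ℝ) (hη : 0 < η) (hG : 0 < G) (hB : 0 ≤ B)
    (N : ℕ) (hN : 1 ≤ N)
    (wstar : E) (hwstar : wstar ∈ W)
    (w : ℕ → E) (g : ℕ → E) (v : ℕ → E)
    (hwW : ∀ j ≤ N, w j ∈ W)
    (hg : ∀ j < N, ‖g j‖ ≤ G)
    (hupd : ∀ j < N, ψ' (v j) = ψ' (w j) - η • g j)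
    (hproj : ∀ j < N, ∀ x ∈ W, Dψ (w (j + 1)) (v j) ≤ Dψ x (v j))
    (hinit : Dψ wstar (w 0) ≤ B ^ 2) :
    ∑ j ∈ Finset.range N, ⟪w j - wstar, g j⟫
      ≤ B ^ 2 / η + N * η * G ^ 2 / 2 := by
  -- Nonnegativity of the Bregman divergence (from strong convexity).
  have hDnn : ∀ x y : E, 0 ≤ Dψ x y := by
    intro x y
    have h := hsc y x
    have hn : (0:ℝ) ≤ ‖x - y‖ ^ 2 / 2 := by positivity
    rw [hD]; linarith
  -- Per-step bound.
  have hstep : ∀ j < N,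
      ⟪w j - wstar, g j⟫ ≤ (Dψ wstar (w j) - Dψ wstar (w (j + 1))) / η + η * G ^ 2 / 2 := by
    intro j hj
    -- Variational inequality for the Bregman projection.
    have hVI : 0 ≤ ⟪ψ' (w (j + 1)) - ψ' (v j), wstar - w (j + 1)⟫ := by
      have hmem : w (j + 1) ∈ W := hwW (j + 1) (by omega)
      have hgrad : HasGradientAt (fun x => Dψ x (v j)) (ψ' (w (j + 1)) - ψ' (v j)) (w (j + 1)) := by
        have h1 := (hψ (w (j + 1))).hasFDerivAt
        have hlin : HasFDerivAt (fun x : E => (InnerProductSpace.toDual ℝ E (ψ' (v j))) x)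
            (InnerProductSpace.toDual ℝ E (ψ' (v j))) (w (j + 1)) :=
          (InnerProductSpace.toDual ℝ E (ψ' (v j))).hasFDerivAt
        have h2 : HasFDerivAt (fun x : E => ψ x - ψ (v j) - ⟪ψ' (v j), x - v j⟫)
            (InnerProductSpace.toDual ℝ E (ψ' (w (j + 1)))
              - InnerProductSpace.toDual ℝ E (ψ' (v j))) (w (j + 1)) := by
          have := (h1.sub_const (ψ (v j))).sub (hlin.sub_const ⟪ψ' (v j), v j⟫)
          simpa [inner_sub_right, sub_sub, Pi.sub_def] using this
        have heq : (fun x => Dψ x (v j)) = fun x : E => ψ x - ψ (v j) - ⟪ψ' (v j), x - v j⟫ :=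
          funext fun x => hD x (v j)
        rw [heq]
        apply hasGradientAt_iff_hasFDerivAt.mpr
        convert h2 using 1
        · rfl
        simp [map_sub]
      refine min_on_segment_inner_nonneg _ _ _ hgrad wstar ?_
      intro t ht
      have hxW : w (j + 1) + t • (wstar - w (j + 1)) ∈ W := by
        have := hWconv hmem hwstar (a := 1 - t) (b := t) (by linarith [ht.2]) ht.1 (by ring)
        convert this using 1
        module
      exact hproj j hj _ hxW
    -- Three-point identities and bounds.
    have hup := hupd j hj
    -- identity 1: η ⟪g j, w j - wstar⟫ = Dψ wstar (w j) - Dψ wstar (v j) + Dψ (w j) (v j)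
    have hid1 : η * ⟪g j, w j - wstar⟫
        = Dψ wstar (w j) - Dψ wstar (v j) + Dψ (w j) (v j) := by
      simp only [hD, hup, inner_sub_left, real_inner_smul_left]
      have e1 : ⟪ψ' (w j), wstar - w j⟫ = ⟪ψ' (w j), wstar - v j⟫ - ⟪ψ' (w j), w j - v j⟫ := by
        rw [← inner_sub_right]; congr 1; abel
      have e2 : ⟪g j, wstar - v j⟫ - ⟪g j, w j - v j⟫ = -⟪g j, w j - wstar⟫ := by
        rw [← inner_sub_right]
        have : wstar - v j - (w j - v j) = -(w j - wstar) := by abel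
        rw [this, inner_neg_right]
      nlinarith [e1, e2]
    -- identity 2 (generalized Pythagoras via VI): Dψ wstar (v j) ≥ Dψ wstar (w (j+1)) + Dψ (w (j+1)) (v j)
    have hid2 : Dψ wstar (w (j + 1)) + Dψ (w (j + 1)) (v j) ≤ Dψ wstar (v j) := by
      have key : Dψ wstar (v j) - Dψ wstar (w (j + 1)) - Dψ (w (j + 1)) (v j)
          = ⟪ψ' (w (j + 1)) - ψ' (v j), wstar - w (j + 1)⟫ := by
        simp only [hD, inner_sub_left]
        have e1 : ⟪ψ' (v j), wstar - v j⟫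
            = ⟪ψ' (v j), wstar - w (j + 1)⟫ + ⟪ψ' (v j), w (j + 1) - v j⟫ := by
          rw [← inner_add_right]; congr 1; abel
        linarith [e1]
      linarith [hVI, key]
    -- identity 3: Dψ (w j) (v j) - Dψ (w (j+1)) (v j) = -Dψ (w (j+1)) (w j) + η ⟪g j, w j - w (j+1)⟫
    have hid3 : Dψ (w j) (v j) - Dψ (w (j + 1)) (v j)
        = -Dψ (w (j + 1)) (w j) + η * ⟪g j, w j - w (j + 1)⟫ := by
      simp only [hD, hup, inner_sub_left, real_inner_smul_left]
      have e1 : ⟪ψ' (w j), w j - v j⟫ - ⟪ψ' (w j), w (j + 1) - v j⟫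
          = -⟪ψ' (w j), w (j + 1) - w j⟫ := by
        rw [← inner_sub_right]
        have : w j - v j - (w (j + 1) - v j) = -(w (j + 1) - w j) := by abel
        rw [this, inner_neg_right]
      have e2 : ⟪g j, w j - v j⟫ - ⟪g j, w (j + 1) - v j⟫ = ⟪g j, w j - w (j + 1)⟫ := by
        rw [← inner_sub_right]; congr 1; abel
      nlinarith [e1, e2]
    -- strong convexity bound
    have hsc1 : ‖w (j + 1) - w j‖ ^ 2 / 2 ≤ Dψ (w (j + 1)) (w j) := by
      have := hsc (w j) (w (j + 1))
      rw [hD]; linarith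
    -- Cauchy-Schwarz + AM-GM
    have hcs : η * ⟪g j, w j - w (j + 1)⟫
        ≤ ‖w (j + 1) - w j‖ ^ 2 / 2 + η ^ 2 * G ^ 2 / 2 := by
      have h3 : ‖w j - w (j + 1)‖ = ‖w (j + 1) - w j‖ := norm_sub_rev _ _
      have h5 : η * ⟪g j, w j - w (j + 1)⟫ ≤ η * (G * ‖w (j + 1) - w j‖) := by
        apply mul_le_mul_of_nonneg_left _ hη.le
        calc ⟪g j, w j - w (j + 1)⟫ ≤ ‖g j‖ * ‖w j - w (j + 1)‖ := real_inner_le_norm _ _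
          _ = ‖g j‖ * ‖w (j + 1) - w j‖ := by rw [h3]
          _ ≤ G * ‖w (j + 1) - w j‖ :=
              mul_le_mul_of_nonneg_right (hg j hj) (norm_nonneg _)
      nlinarith [sq_nonneg (η * G - ‖w (j + 1) - w j‖)]
    have hηs : η * ⟪g j, w j - wstar⟫
        ≤ Dψ wstar (w j) - Dψ wstar (w (j + 1)) + η ^ 2 * G ^ 2 / 2 := by
      linarith [hid1, hid2, hid3, hsc1, hcs]
    have hcomm : ⟪w j - wstar, g j⟫ = ⟪g j, w j - wstar⟫ := real_inner_comm _ _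
    rw [hcomm]
    have h6 : ⟪g j, w j - wstar⟫
        ≤ (Dψ wstar (w j) - Dψ wstar (w (j + 1)) + η ^ 2 * G ^ 2 / 2) / η :=
      (le_div_iff₀ hη).mpr (by linarith)
    calc ⟪g j, w j - wstar⟫
        ≤ (Dψ wstar (w j) - Dψ wstar (w (j + 1)) + η ^ 2 * G ^ 2 / 2) / η := h6
      _ = (Dψ wstar (w j) - Dψ wstar (w (j + 1))) / η + η * G ^ 2 / 2 := by
          field_simp
  -- Sum up.
  calc ∑ j ∈ Finset.range N, ⟪w j - wstar, g j⟫
      ≤ ∑ j ∈ Finset.range N,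
          ((Dψ wstar (w j) - Dψ wstar (w (j + 1))) / η + η * G ^ 2 / 2) := by
        apply Finset.sum_le_sum
        intro j hj
        exact hstep j (Finset.mem_range.mp hj)
    _ = (∑ j ∈ Finset.range N, (Dψ wstar (w j) - Dψ wstar (w (j + 1)))) / η
          + N * (η * G ^ 2 / 2) := by
        rw [Finset.sum_add_distrib, Finset.sum_div, Finset.sum_const, Finset.card_range]
        simp [Finset.sum_div, nsmul_eq_mul]
    _ = (Dψ wstar (w 0) - Dψ wstar (w N)) / η + N * (η * G ^ 2 / 2) := by
        rw [Finset.sum_range_sub' (fun j => Dψ wstar (w j))]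
    _ ≤ B ^ 2 / η + N * η * G ^ 2 / 2 := by
        have h1 : Dψ wstar (w 0) - Dψ wstar (w N) ≤ B ^ 2 := by
          linarith [hDnn wstar (w N), hinit]
        have h2 : (Dψ wstar (w 0) - Dψ wstar (w N)) / η ≤ B ^ 2 / η := by gcongr
        have : (N:ℝ) * (η * G ^ 2 / 2) = N * η * G ^ 2 / 2 := by ring
        linarith [h2, this.le]
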